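/- Let Mⱼ be an increasing sequence of open subsets of ℂⁿ whose union M = ∪ⱼ Mⱼ is connected, and let Ωⱼ ⊆ ℂⁿ and Ω∞ ⊆ ℂⁿ be open sets such that every compact subset of Ω∞ is contained in Ωⱼ for all sufficiently large j. Let ψʲ : Mⱼ → Ωⱼ be biholomorphisms with inverses φʲ : Ωⱼ → Mⱼ. Suppose that: (a) ψʲ converges uniformly on compact subsets of M to a map ψ : M → Ω∞ which is injective and holomorphic; and (b) φʲ converges uniformly on compact subsets of Ω∞ to a map φ : Ω∞ → ℂⁿ with φ(Ω∞) ⊆ M. Then ψ ∘ φ is the identity on Ω∞ and φ ∘ ψ is the identity on M; in particular ψ is a biholomorphism of M onto Ω∞. -/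

import Mathlib

open Metric Set Filter Topology

noncomputable section

theorem stmt_17 (n : ℕ)
    (Ms : ℕ → Set (EuclideanSpace ℂ (Fin n)))
    (hmono : Monotone Ms) (hopen : ∀ j, IsOpen (Ms j))
    (M : Set (EuclideanSpace ℂ (Fin n))) (hM : M = ⋃ j, Ms j)
    (hconn : IsConnected M)
    (Ωs : ℕ → Set (EuclideanSpace ℂ (Fin n)))
    (Ωinf : Set (EuclideanSpace ℂ (Fin n)))
    (hΩo : ∀ j, IsOpen (Ωs j)) (hΩio : IsOpen Ωinf)
    (hcpt : ∀ K ⊆ Ωinf, IsCompact K → ∃ j0, ∀ j ≥ j0, K ⊆ Ωs j)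
    (ψ φ : ℕ → EuclideanSpace ℂ (Fin n) → EuclideanSpace ℂ (Fin n))
    (hψd : ∀ j, DifferentiableOn ℂ (ψ j) (Ms j))
    (hbij : ∀ j, BijOn (ψ j) (Ms j) (Ωs j))
    (hφd : ∀ j, DifferentiableOn ℂ (φ j) (Ωs j))
    (hinv : ∀ j, ∀ z ∈ Ms j, φ j (ψ j z) = z)
    (hinv' : ∀ j, ∀ w ∈ Ωs j, ψ j (φ j w) = w)
    (ψl : EuclideanSpace ℂ (Fin n) → EuclideanSpace ℂ (Fin n))
    (hψl : ∀ K ⊆ M, IsCompact K → TendstoUniformlyOn ψ ψl atTop K)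
    (hψinj : InjOn ψl M) (hψhol : DifferentiableOn ℂ ψl M)
    (hψmaps : MapsTo ψl M Ωinf)
    (φl : EuclideanSpace ℂ (Fin n) → EuclideanSpace ℂ (Fin n))
    (hφl : ∀ K ⊆ Ωinf, IsCompact K → TendstoUniformlyOn φ φl atTop K)
    (hφmaps : MapsTo φl Ωinf M) :
    (∀ w ∈ Ωinf, ψl (φl w) = w) ∧
    (∀ z ∈ M, φl (ψl z) = z) ∧
    BijOn ψl M Ωinf := by
  have h1 : ∀ w ∈ Ωinf, ψl (φl w) = w := by
    intro w hw
    -- eventually w ∈ Ωs j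
    obtain ⟨j0, hj0⟩ := hcpt {w} (singleton_subset_iff.2 hw) isCompact_singleton
    have hwΩ : ∀ᶠ j in atTop, w ∈ Ωs j :=
      eventually_atTop.2 ⟨j0, fun j hj => hj0 j hj rfl⟩
    -- φ j w → φl w
    have htφ : Tendsto (fun j => φ j w) atTop (𝓝 (φl w)) :=
      tendstoUniformlyOn_singleton_iff_tendsto.1
        (hφl {w} (singleton_subset_iff.2 hw) isCompact_singleton)
    have hx : φl w ∈ M := hφmaps hw
    obtain ⟨r, hr, hball⟩ := (Metric.isOpen_iff.1 (hM ▸ isOpen_iUnion hopen)) _ hx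
    have hKM : closedBall (φl w) (r / 2) ⊆ M := fun y hy =>
      hball (mem_ball.2 (lt_of_le_of_lt (mem_closedBall.1 hy) (by linarith)))
    have hK : IsCompact (closedBall (φl w) (r / 2)) := isCompact_closedBall _ _
    have hcw : ContinuousWithinAt ψl (closedBall (φl w) (r / 2)) (φl w) :=
      ((hψhol.continuousOn _ hx).mono hKM)
    have hgs : ∀ᶠ j in atTop, φ j w ∈ closedBall (φl w) (r / 2) :=
      htφ (closedBall_mem_nhds _ (by linarith))
    have htg : Tendsto (fun j => φ j w) atTop (𝓝[closedBall (φl w) (r / 2)] (φl w)) :=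
      tendsto_nhdsWithin_iff.2 ⟨htφ, hgs⟩
    have hcomp : Tendsto (fun j => ψ j (φ j w)) atTop (𝓝 (ψl (φl w))) :=
      (hψl _ hKM hK).tendsto_comp hcw htg
    have heq : ∀ᶠ j in atTop, ψ j (φ j w) = w :=
      hwΩ.mono fun j hj => hinv' j w hj
    have : Tendsto (fun _ : ℕ => w) atTop (𝓝 (ψl (φl w))) :=
      hcomp.congr' heq
    exact tendsto_nhds_unique this tendsto_const_nhds
  have h2 : ∀ z ∈ M, φl (ψl z) = z := by
    intro z hz
    obtain ⟨j1, hj1⟩ := mem_iUnion.1 (hM ▸ hz)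
    have hzM : ∀ᶠ j in atTop, z ∈ Ms j :=
      eventually_atTop.2 ⟨j1, fun j hj => hmono hj hj1⟩
    have htψ : Tendsto (fun j => ψ j z) atTop (𝓝 (ψl z)) :=
      tendstoUniformlyOn_singleton_iff_tendsto.1
        (hψl {z} (singleton_subset_iff.2 hz) isCompact_singleton)
    have hx : ψl z ∈ Ωinf := hψmaps hz
    obtain ⟨r, hr, hball⟩ := Metric.isOpen_iff.1 hΩio _ hx
    have hKΩ : closedBall (ψl z) (r / 2) ⊆ Ωinf := fun y hy =>
      hball (mem_ball.2 (lt_of_le_of_lt (mem_closedBall.1 hy) (by linarith)))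
    have hK : IsCompact (closedBall (ψl z) (r / 2)) := isCompact_closedBall _ _
    have htu : TendstoUniformlyOn φ φl atTop (closedBall (ψl z) (r / 2)) :=
      hφl _ hKΩ hK
    obtain ⟨j2, hj2⟩ := hcpt _ hKΩ hK
    have hφcont : ContinuousOn φl (closedBall (ψl z) (r / 2)) := by
      refine htu.continuousOn ?_
      refine Filter.Eventually.frequently (eventually_atTop.2 ⟨j2, fun j hj => ?_⟩)
      exact ((hφd j).continuousOn).mono (hj2 j hj)
    have hcw : ContinuousWithinAt φl (closedBall (ψl z) (r / 2)) (ψl z) :=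
      hφcont _ (mem_closedBall_self (by linarith))
    have hgs : ∀ᶠ j in atTop, ψ j z ∈ closedBall (ψl z) (r / 2) :=
      htψ (closedBall_mem_nhds _ (by linarith))
    have htg : Tendsto (fun j => ψ j z) atTop (𝓝[closedBall (ψl z) (r / 2)] (ψl z)) :=
      tendsto_nhdsWithin_iff.2 ⟨htψ, hgs⟩
    have hcomp : Tendsto (fun j => φ j (ψ j z)) atTop (𝓝 (φl (ψl z))) :=
      htu.tendsto_comp hcw htg
    have heq : ∀ᶠ j in atTop, φ j (ψ j z) = z :=
      hzM.mono fun j hj => hinv j z hj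
    have : Tendsto (fun _ : ℕ => z) atTop (𝓝 (φl (ψl z))) :=
      hcomp.congr' heq
    exact tendsto_nhds_unique this tendsto_const_nhds
  exact ⟨h1, h2, hψmaps, hψinj, fun w hw => ⟨φl w, hφmaps hw, h1 w hw⟩⟩
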